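/- Let A be an n-by-n reciprocal matrix and C a Hamiltonian cycle γ_1→⋯→γ_n→γ_1 whose cycle product in A is at most 1. Then there exists a positive vector w such that G(A,w) contains C; i.e., the set ε_A(C) = {w > 0 : G(A,w) contains C} is nonempty. -/

import Mathlib

def Reciprocal {n : ℕ} (A : Matrix (Fin n) (Fin n) ℝ) : Prop :=
  (∀ i j, 0 < A i j) ∧ ∀ i j, A j i = 1 / A i j

/-- If the cycle product of the Hamiltonian cycle `γ` in `A` is at most `1`,
then the set `ε_A(C)` is nonempty. -/
theorem stmt3 {n : ℕ} [NeZero n] (A : Matrix (Fin n) (Fin n) ℝ) (hA : Reciprocal A)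
    (γ : Fin n → Fin n) (hγ : Function.Bijective γ)
    (hprod : (∏ k : Fin n, A (γ k) (γ (k + 1))) ≤ 1) :
    ∃ w : Fin n → ℝ, (∀ i, 0 < w i) ∧
      ∀ k : Fin n, A (γ k) (γ (k + 1)) * w (γ (k + 1)) ≤ w (γ k) := by
  have hn : 0 < n := Nat.pos_of_ne_zero (NeZero.ne n)
  open Fin.NatCast in
  set P : ℕ → ℝ := fun j => A (γ (↑j : Fin n)) (γ ((↑j : Fin n) + 1)) with hP
  have hPpos : ∀ j, 0 < P j := fun j => hA.1 _ _
  set v : Fin n → ℝ := fun k => (∏ j ∈ Finset.range k.val, P j)⁻¹ with hv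
  have hvpos : ∀ k, 0 < v k := fun k => inv_pos.mpr (Finset.prod_pos fun j _ => hPpos j)
  let e := Equiv.ofBijective γ hγ
  refine ⟨fun i => v (e.symm i), fun i => hvpos _, ?_⟩
  intro k
  have hsymm : ∀ m : Fin n, e.symm (γ m) = m := fun m => e.symm_apply_apply m
  simp only [hsymm]
  have hadd : (k + 1 : Fin n).val = (k.val + 1) % n := by
    rw [Fin.add_def]; norm_num
  by_cases hk : k.val + 1 < n
  · have h1 : (k + 1 : Fin n).val = k.val + 1 := by
      rw [hadd, Nat.mod_eq_of_lt hk]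
    open Fin.NatCast in
    have hPk : P k.val = A (γ k) (γ (k + 1)) := by
      have h2 : ((↑(k.val) : Fin n)) = k := Fin.cast_val_eq_self k
      simp [hP, h2]
    have hveq : v (k + 1) = (∏ j ∈ Finset.range k.val, P j)⁻¹ * (P k.val)⁻¹ := by
      simp only [hv, h1, Finset.prod_range_succ, mul_inv]
    rw [hveq, hPk]
    have hApos := hA.1 (γ k) (γ (k + 1))
    rw [mul_comm ((∏ j ∈ Finset.range k.val, P j)⁻¹) _, ← mul_assoc,
      mul_inv_cancel₀ (ne_of_gt hApos), one_mul]
  · have hkval : k.val = n - 1 := by have := k.isLt; omega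
    have hk1val : (k + 1 : Fin n).val = 0 := by
      rw [hadd, hkval]
      have : n - 1 + 1 = n := by omega
      rw [this, Nat.mod_self]
    have hveq : v (k + 1) = 1 := by simp [hv, hk1val]
    rw [hveq, mul_one]
    open Fin.NatCast in
    have hprod' : (∏ j ∈ Finset.range n, P j) ≤ 1 := by
      calc (∏ j ∈ Finset.range n, P j) = ∏ m : Fin n, A (γ m) (γ (m + 1)) := by
            rw [← Fin.prod_univ_eq_prod_range]
            exact Finset.prod_congr rfl fun j _ => by simp [hP, Fin.cast_val_eq_self]
        _ ≤ 1 := hprod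
    have hnk : n = k.val + 1 := by omega
    have hsplit : (∏ j ∈ Finset.range n, P j)
        = (∏ j ∈ Finset.range k.val, P j) * P k.val := by
      rw [show Finset.range n = Finset.range (k.val + 1) from by rw [← hnk],
        Finset.prod_range_succ]
    open Fin.NatCast in
    have hPk : P k.val = A (γ k) (γ (k + 1)) := by
      simp [hP, Fin.cast_val_eq_self]
    rw [hsplit, hPk] at hprod'
    have hppos : 0 < (∏ j ∈ Finset.range k.val, P j) :=
      Finset.prod_pos fun j _ => hPpos j
    rw [hv]
    simp only
    rw [← le_div_iff₀ (hA.1 (γ k) (γ (k + 1)))] at hprod'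
    rw [le_inv_comm₀ (hA.1 _ _) hppos, ← one_div]
    exact hprod'
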